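/- Under the hypotheses of the block lemma (entries sorted by decreasing magnitude, block T_j = {i,...,i+s−1} satisfying (1/2)|x_ℓ| ≤ ‖x_{{ℓ+1,...,K}}‖₂ for ℓ = i,...,i+s−2 and (1/2)|x_{i+s−1}| > ‖x_{{i+s,...,K}}‖₂), it holds that |x_{i+s−1}| ≥ (2/3^s) ‖x_{{i,...,K}}‖₂. -/

import Mathlib

open scoped BigOperators

/-- Squared-sum Euclidean norm of a finite vector. -/
noncomputable def l2norm {ι : Type*} [Fintype ι] (v : ι → ℝ) : ℝ :=
  Real.sqrt (∑ i, v i ^ 2)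

/-- The ℓ₁ norm of a finite vector. -/
noncomputable def l1norm {ι : Type*} [Fintype ι] (v : ι → ℝ) : ℝ :=
  ∑ i, |v i|

/-- `Φ_I q`: the product of the column submatrix `Φ_I` with a coefficient vector `q`. -/
noncomputable def colMul {m N : ℕ} (Φ : Matrix (Fin m) (Fin N) ℝ) (I : Finset (Fin N))
    (q : I → ℝ) : Fin m → ℝ :=
  fun r => ∑ i : I, Φ r i.1 * q i

/-- `Φ_I^* y`: the transpose of the column submatrix applied to `y`. -/
noncomputable def colTMul {m N : ℕ} (Φ : Matrix (Fin m) (Fin N) ℝ) (I : Finset (Fin N))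
    (y : Fin m → ℝ) : I → ℝ :=
  fun i => ∑ r, Φ r i.1 * y r

/-- The Gram matrix `Φ_I^* Φ_I`. -/
noncomputable def gram {m N : ℕ} (Φ : Matrix (Fin m) (Fin N) ℝ) (I : Finset (Fin N)) :
    Matrix I I ℝ :=
  fun i j => ∑ r, Φ r i.1 * Φ r j.1

/-- `Φ` satisfies the restricted isometry property at sparsity `K` with parameter `δ`. -/
def IsRIP {m N : ℕ} (Φ : Matrix (Fin m) (Fin N) ℝ) (K : ℕ) (δ : ℝ) : Prop :=
  ∀ I : Finset (Fin N), I.card ≤ K → ∀ q : I → ℝ,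
    (1 - δ) * ∑ i, q i ^ 2 ≤ ∑ r, (colMul Φ I q r) ^ 2 ∧
      ∑ r, (colMul Φ I q r) ^ 2 ≤ (1 + δ) * ∑ i, q i ^ 2

/-- The RIP constant `δ_K`: the infimum of all admissible RIP parameters. -/
noncomputable def ripConst {m N : ℕ} (Φ : Matrix (Fin m) (Fin N) ℝ) (K : ℕ) : ℝ :=
  sInf {δ : ℝ | 0 ≤ δ ∧ IsRIP Φ K δ}

/-- Projection coefficients `(Φ_I^* Φ_I)⁻¹ Φ_I^* y`. -/
noncomputable def projCoeff {m N : ℕ} (Φ : Matrix (Fin m) (Fin N) ℝ) (I : Finset (Fin N))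
    (y : Fin m → ℝ) : I → ℝ :=
  (gram Φ I)⁻¹.mulVec (colTMul Φ I y)

/-- Orthogonal projection of `y` onto the column span of `Φ_I`. -/
noncomputable def projVec {m N : ℕ} (Φ : Matrix (Fin m) (Fin N) ℝ) (I : Finset (Fin N))
    (y : Fin m → ℝ) : Fin m → ℝ :=
  colMul Φ I (projCoeff Φ I y)


lemma sqrt_sum_sq_le_sum_abs (x : ℕ → ℝ) (S : Finset ℕ) :
    Real.sqrt (∑ t ∈ S, x t ^ 2) ≤ ∑ t ∈ S, |x t| := by
  have h : ∑ t ∈ S, x t ^ 2 ≤ (∑ t ∈ S, |x t|) ^ 2 := by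
    have := Finset.sum_sq_le_sq_sum_of_nonneg (s := S) (f := fun t => |x t|)
      (fun t _ => abs_nonneg _)
    simpa [sq_abs] using this
  calc Real.sqrt (∑ t ∈ S, x t ^ 2) ≤ Real.sqrt ((∑ t ∈ S, |x t|) ^ 2) :=
        Real.sqrt_le_sqrt h
    _ = ∑ t ∈ S, |x t| := Real.sqrt_sq (Finset.sum_nonneg fun t _ => abs_nonneg _)

lemma sqrt_split (x : ℕ → ℝ) (a e K : ℕ) (hae : a ≤ e + 1) (heK : e ≤ K) :
    Real.sqrt (∑ t ∈ Finset.Icc a K, x t ^ 2) ≤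
      (∑ t ∈ Finset.Icc a e, |x t|) +
        Real.sqrt (∑ t ∈ Finset.Icc (e + 1) K, x t ^ 2) := by
  have hsplit : Finset.Icc a K = Finset.Icc a e ∪ Finset.Icc (e + 1) K := by
    ext t; simp only [Finset.mem_Icc, Finset.mem_union]; omega
  have hdisj : Disjoint (Finset.Icc a e) (Finset.Icc (e + 1) K) := by
    rw [Finset.disjoint_left]; intro t ht ht'
    simp only [Finset.mem_Icc] at ht ht'; omega
  rw [hsplit, Finset.sum_union hdisj]
  set A := ∑ t ∈ Finset.Icc a e, x t ^ 2 with hA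
  set B := ∑ t ∈ Finset.Icc (e + 1) K, x t ^ 2 with hB
  have hA0 : 0 ≤ A := Finset.sum_nonneg fun t _ => sq_nonneg _
  have hB0 : 0 ≤ B := Finset.sum_nonneg fun t _ => sq_nonneg _
  have h1 : Real.sqrt (A + B) ≤ Real.sqrt A + Real.sqrt B := by
    have h2 : A + B ≤ (Real.sqrt A + Real.sqrt B) ^ 2 := by
      nlinarith [Real.sq_sqrt hA0, Real.sq_sqrt hB0, Real.sqrt_nonneg A,
        Real.sqrt_nonneg B]
    calc Real.sqrt (A + B) ≤ Real.sqrt ((Real.sqrt A + Real.sqrt B) ^ 2) :=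
          Real.sqrt_le_sqrt h2
      _ = Real.sqrt A + Real.sqrt B := Real.sqrt_sq (by positivity)
  exact h1.trans (add_le_add_left (sqrt_sum_sq_le_sum_abs x _) _)

theorem block_last_entry_bound {K : ℕ} (x : ℕ → ℝ)
    (hsort : ∀ j, 1 ≤ j → j < K → |x (j + 1)| ≤ |x j|)
    (hpos : 0 < |x K|)
    (i s : ℕ) (hi : 1 ≤ i) (hs : 1 ≤ s) (hend : i + s - 1 ≤ K)
    (hblock : ∀ j, i ≤ j → j + 1 ≤ i + s - 1 →
      (1 / 2) * |x j| ≤ Real.sqrt (∑ t ∈ Finset.Icc (j + 1) K, x t ^ 2))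
    (hterm : Real.sqrt (∑ t ∈ Finset.Icc (i + s) K, x t ^ 2) <
      (1 / 2) * |x (i + s - 1)|) :
    (2 / 3 ^ s) * Real.sqrt (∑ t ∈ Finset.Icc i K, x t ^ 2) ≤ |x (i + s - 1)| := by
  set e := i + s - 1 with he
  have heiK : i ≤ e ∧ e ≤ K ∧ e - i = s - 1 := by omega
  have htail : Real.sqrt (∑ t ∈ Finset.Icc (e + 1) K, x t ^ 2) ≤ (1/2) * |x e| := by
    have : i + s = e + 1 := by omega
    rw [← this]; exact le_of_lt hterm
  -- main induction: partial sums of |x| over Icc (e-d) e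
  have main : ∀ d, d ≤ e - i →
      ∑ t ∈ Finset.Icc (e - d) e, |x t| ≤ ((3:ℝ) ^ (d + 1) - 1) / 2 * |x e| := by
    intro d
    induction d with
    | zero =>
      intro _
      simp [Finset.Icc_self]
      nlinarith [abs_nonneg (x e)]
    | succ d ih =>
      intro hd
      have hd' : d ≤ e - i := by omega
      have ihd := ih hd'
      have hj : e - (d + 1) + 1 = e - d := by omega
      have hji : i ≤ e - (d + 1) := by omega
      have hjb : (e - (d + 1)) + 1 ≤ i + s - 1 := by omega
      have hb := hblock (e - (d + 1)) hji hjb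
      rw [hj] at hb
      have hsp := sqrt_split x (e - d) e K (by omega) heiK.2.1
      have hxj : (1/2) * |x (e - (d+1))| ≤
          (∑ t ∈ Finset.Icc (e - d) e, |x t|) + (1/2) * |x e| :=
        hb.trans (hsp.trans (add_le_add_right htail _))
      have hsplit2 : Finset.Icc (e - (d+1)) e =
          insert (e - (d+1)) (Finset.Icc (e - d) e) := by
        ext t; simp only [Finset.mem_Icc, Finset.mem_insert]; omega
      have hnotmem : e - (d+1) ∉ Finset.Icc (e - d) e := by
        simp only [Finset.mem_Icc]; omega
      rw [hsplit2, Finset.sum_insert hnotmem]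
      have h3 : ((3:ℝ) ^ (d + 1 + 1) - 1) / 2 = 3 * (((3:ℝ) ^ (d + 1) - 1) / 2) + 1 := by
        rw [pow_succ]
        ring
      rw [h3]
      nlinarith [abs_nonneg (x e)]
  have hfin := main (e - i) le_rfl
  have hii : e - (e - i) = i := by omega
  rw [hii] at hfin
  have hss : (e - i) + 1 = s := by omega
  rw [hss] at hfin
  have hsp := sqrt_split x i e K (by omega) heiK.2.1
  have hA : Real.sqrt (∑ t ∈ Finset.Icc i K, x t ^ 2) ≤ (3:ℝ) ^ s / 2 * |x e| := by
    have := hsp.trans (add_le_add hfin htail)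
    nlinarith [this]
  have h3s : (0:ℝ) < 3 ^ s := by positivity
  have hA0 : 0 ≤ Real.sqrt (∑ t ∈ Finset.Icc i K, x t ^ 2) := Real.sqrt_nonneg _
  rw [div_mul_eq_mul_div, div_le_iff₀ h3s]
  nlinarith [hA]
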